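/- Let T be a tree on vertex set [n], and let B_n^T denote the set of partitions of [n] whose blocks induce connected subtrees of T. Define the square matrix A_T indexed by pairs (S, π) where S ⊆ [n] has even cardinality and π ∈ B_n^T, with A_T(S,π) = 1 if every block of π|_S has even size and 0 otherwise. Then the matrix B defined by B(S,π) = ∑_{π' ◁ π} (-1)^{‖π‖-‖π'‖} A_T(S,π') (sum over partitions π' refining π with blocks inducing connected subtrees) is a permutation matrix; in particular A_T is invertible and has full rank 2^{n-1}. -/

import Mathlib

open Finset

set_option maxHeartbeats 1000000

attribute [local instance 0] Classical.propDecidable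

namespace Stmt3Aux

variable {n : ℕ}

/-- graph from a finite edge set -/
noncomputable def GF (F : Finset (Sym2 (Fin n))) : SimpleGraph (Fin n) :=
  SimpleGraph.fromEdgeSet ↑F

lemma GF_adj {F : Finset (Sym2 (Fin n))} {x y : Fin n} :
    (GF F).Adj x y ↔ s(x, y) ∈ F ∧ x ≠ y := by
  simp [GF, SimpleGraph.fromEdgeSet_adj]

/-- reachability class -/
noncomputable def cls (F : Finset (Sym2 (Fin n))) (v : Fin n) : Finset (Fin n) :=
  univ.filter fun w => (GF F).Reachable v w

@[simp] lemma mem_cls {F : Finset (Sym2 (Fin n))} {v w : Fin n} :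
    w ∈ cls F v ↔ (GF F).Reachable v w := by simp [cls]

/-- partition into connected components of `GF F` -/
noncomputable def part (F : Finset (Sym2 (Fin n))) : Finpartition (univ : Finset (Fin n)) :=
  Finpartition.ofSetoid (GF F).reachableSetoid

lemma parts_part (F : Finset (Sym2 (Fin n))) :
    (part F).parts = univ.image (cls F) := by
  unfold part Finpartition.ofSetoid
  congr 1
  apply Finset.image_congr
  intro a _
  ext w
  simp only [Finset.mem_filter, mem_cls, Finset.mem_univ, true_and]
  rfl

lemma mem_parts_part {F : Finset (Sym2 (Fin n))} {b : Finset (Fin n)} :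
    b ∈ (part F).parts ↔ ∃ v, b = cls F v := by
  rw [parts_part]; simp [eq_comm]

/-- an edge crosses a vertex set -/
def crosses (W : Finset (Fin n)) (e : Sym2 (Fin n)) : Prop :=
  (∃ a ∈ e, a ∈ W) ∧ (∃ b ∈ e, b ∉ W)

lemma crosses_mk {W : Finset (Fin n)} {x y : Fin n} :
    crosses W s(x, y) ↔ ((x ∈ W ∨ y ∈ W) ∧ (x ∉ W ∨ y ∉ W)) := by
  simp only [crosses, Sym2.mem_iff]
  constructor
  · rintro ⟨⟨a, ha, haW⟩, ⟨b, hb, hbW⟩⟩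
    constructor
    · rcases ha with rfl | rfl; exacts [Or.inl haW, Or.inr haW]
    · rcases hb with rfl | rfl; exacts [Or.inl hbW, Or.inr hbW]
  · rintro ⟨h1, h2⟩
    constructor
    · rcases h1 with h | h; exacts [⟨x, Or.inl rfl, h⟩, ⟨y, Or.inr rfl, h⟩]
    · rcases h2 with h | h; exacts [⟨x, Or.inl rfl, h⟩, ⟨y, Or.inr rfl, h⟩]

lemma exists_crossing_edge {G : SimpleGraph (Fin n)} {W : Finset (Fin n)} {x y : Fin n}
    (h : G.Reachable x y) (hx : x ∈ W) (hy : y ∉ W) :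
    ∃ a b, G.Adj a b ∧ a ∈ W ∧ b ∉ W := by
  obtain ⟨p⟩ := h
  induction p with
  | nil => exact absurd hx hy
  | cons h q ih =>
    rename_i u v w
    by_cases hv : v ∈ W
    · exact ih hv hy
    · exact ⟨u, v, h, hx, hv⟩

lemma reach_stays {F : Finset (Sym2 (Fin n))} {W : Finset (Fin n)}
    (hF : ∀ f ∈ F, ¬ crosses W f) {x y : Fin n} (hx : x ∈ W)
    (h : (GF F).Reachable x y) : y ∈ W := by
  by_contra hy
  obtain ⟨a, b, hab, ha, hb⟩ := exists_crossing_edge h hx hy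
  rw [GF_adj] at hab
  exact hF _ hab.1 (crosses_mk.2 ⟨Or.inl ha, Or.inr hb⟩)

variable {T : SimpleGraph (Fin n)}

/-- the `u`-side of edge `s(u,v)` in `T` -/
noncomputable def sideOf (T : SimpleGraph (Fin n)) (u v : Fin n) : Finset (Fin n) :=
  univ.filter fun w => (T \ SimpleGraph.fromEdgeSet {s(u, v)}).Reachable u w

lemma mem_sideOf {u v w : Fin n} :
    w ∈ sideOf T u v ↔ (T \ SimpleGraph.fromEdgeSet {s(u, v)}).Reachable u w := by
  simp [sideOf]

lemma mem_sideOf_self {u v : Fin n} : u ∈ sideOf T u v := by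
  rw [mem_sideOf]

lemma not_mem_sideOf (hT : T.IsAcyclic) {u v : Fin n} (h : T.Adj u v) :
    v ∉ sideOf T u v := by
  rw [mem_sideOf]
  exact ((SimpleGraph.isAcyclic_iff_forall_adj_isBridge.1 hT) h)

lemma not_crosses_sideOf (hT : T.IsAcyclic) {u v : Fin n} (h : T.Adj u v)
    {f : Sym2 (Fin n)} (hf : f ∈ T.edgeSet) (hne : f ≠ s(u, v)) :
    ¬ crosses (sideOf T u v) f := by
  induction f with
  | _ x y =>
    rw [SimpleGraph.mem_edgeSet] at hf
    have key : ∀ a b : Fin n, T.Adj a b → s(a, b) ≠ s(u, v) →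
        a ∈ sideOf T u v → b ∈ sideOf T u v := by
      intro a b hab hne ha
      rw [mem_sideOf] at ha ⊢
      refine ha.trans (SimpleGraph.Adj.reachable ?_)
      rw [SimpleGraph.sdiff_adj]
      refine ⟨hab, ?_⟩
      rw [SimpleGraph.fromEdgeSet_adj]
      rintro ⟨hmem, -⟩
      exact hne (Set.mem_singleton_iff.1 hmem)
    rw [crosses_mk]
    rintro ⟨h1, h2⟩
    rcases h1 with hx | hy
    · have := key x y hf hne hx
      rcases h2 with h2 | h2
      exacts [h2 hx, h2 this]
    · have := key y x hf.symm (by rwa [Sym2.eq_swap]) hy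
      rcases h2 with h2 | h2
      exacts [h2 this, h2 hy]

/-- components of `GF F` stay on one side of an edge not in `F` -/
lemma reach_stays_side (hT : T.IsAcyclic) {u v : Fin n} (h : T.Adj u v)
    {F : Finset (Sym2 (Fin n))} (hF : ↑F ⊆ T.edgeSet) (he : s(u, v) ∉ F)
    {x y : Fin n} (hx : x ∈ sideOf T u v) (hr : (GF F).Reachable x y) :
    y ∈ sideOf T u v :=
  reach_stays (fun f hf => not_crosses_sideOf hT h (hF hf)
    (fun hh => he (hh ▸ hf))) hx hr

/-- the set of `T`-edges internal to blocks of `π` -/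
noncomputable def Epi (T : SimpleGraph (Fin n)) (π : Finpartition (univ : Finset (Fin n))) :
    Finset (Sym2 (Fin n)) :=
  T.edgeFinset.filter fun e => ∃ b ∈ π.parts, ∀ a ∈ e, a ∈ b

lemma Epi_subset (π : Finpartition (univ : Finset (Fin n))) : Epi T π ⊆ T.edgeFinset :=
  Finset.filter_subset _ _

lemma mem_Epi {π : Finpartition (univ : Finset (Fin n))} {e : Sym2 (Fin n)} :
    e ∈ Epi T π ↔ e ∈ T.edgeFinset ∧ ∃ b ∈ π.parts, ∀ a ∈ e, a ∈ b := Finset.mem_filter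

lemma blocks_stable {π : Finpartition (univ : Finset (Fin n))} {x y : Fin n}
    (h : (GF (Epi T π)).Reachable x y) {b : Finset (Fin n)} (hb : b ∈ π.parts)
    (hx : x ∈ b) : y ∈ b := by
  obtain ⟨p⟩ := h
  induction p with
  | nil => exact hx
  | cons h q ih =>
    rename_i u v w
    refine ih ?_
    rw [GF_adj, mem_Epi] at h
    obtain ⟨⟨-, c, hc, hmem⟩, -⟩ := h
    have hcb : c = b := π.eq_of_mem_parts hc hb (hmem u (by simp)) hx
    exact hcb ▸ hmem v (by simp)

lemma reach_induce {F : Finset (Sym2 (Fin n))} (hF : ↑F ⊆ T.edgeSet)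
    {b : Finset (Fin n)} {x y : Fin n} (hx : x ∈ b) (hy : y ∈ b)
    (p : (GF F).Walk x y) (hp : ∀ w ∈ p.support, w ∈ b) :
    (T.induce (↑b : Set (Fin n))).Reachable ⟨x, hx⟩ ⟨y, hy⟩ := by
  induction p with
  | nil => rfl
  | cons h q ih =>
    rename_i u v w
    have hv : v ∈ b := hp v (by simp)
    refine SimpleGraph.Reachable.trans (SimpleGraph.Adj.reachable ?_)
      (ih hv hy (fun z hz => hp z (by simp [hz])))
    rw [GF_adj] at h
    have : T.Adj u v := by
      have := hF h.1; rwa [SimpleGraph.mem_edgeSet] at this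
    exact this

/-- blocks of `part F` induce connected subgraphs of `T` -/
lemma part_conn {F : Finset (Sym2 (Fin n))} (hF : ↑F ⊆ T.edgeSet) :
    ∀ b ∈ (part F).parts, (T.induce (↑b : Set (Fin n))).Connected := by
  intro b hb
  obtain ⟨v, rfl⟩ := mem_parts_part.1 hb
  rw [SimpleGraph.connected_iff]
  constructor
  · rintro ⟨x, hx⟩ ⟨y, hy⟩
    rw [Finset.mem_coe, mem_cls] at hx hy
    obtain ⟨p⟩ := hx.symm.trans hy
    refine reach_induce hF _ _ p ?_
    intro w hw
    rw [mem_cls]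
    exact hx.trans ⟨p.takeUntil w hw⟩
  · exact ⟨⟨v, by rw [Finset.mem_coe, mem_cls]⟩⟩

/-- reachability within a connected block -/
lemma block_reach {π : Finpartition (univ : Finset (Fin n))}
    (hπ : ∀ b ∈ π.parts, (T.induce (↑b : Set (Fin n))).Connected)
    {b : Finset (Fin n)} (hb : b ∈ π.parts) {x y : Fin n} (hx : x ∈ b) (hy : y ∈ b) :
    (GF (Epi T π)).Reachable x y := by
  obtain ⟨p⟩ := (hπ b hb).preconnected ⟨x, hx⟩ ⟨y, hy⟩
  have : ∀ (a c : ↑(↑b : Set (Fin n))) (q : (T.induce (↑b : Set (Fin n))).Walk a c),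
      (GF (Epi T π)).Reachable a c := by
    intro a c q
    induction q with
    | nil => exact SimpleGraph.Reachable.refl _
    | cons h q ih =>
      rename_i u v w
      refine SimpleGraph.Reachable.trans (SimpleGraph.Adj.reachable ?_) ih
      have hadj : T.Adj u.1 v.1 := h
      rw [GF_adj]
      refine ⟨?_, hadj.ne⟩
      rw [mem_Epi]
      refine ⟨by rwa [SimpleGraph.mem_edgeFinset, SimpleGraph.mem_edgeSet], b, hb, ?_⟩
      intro a ha
      rw [Sym2.mem_iff] at ha
      rcases ha with rfl | rfl
      exacts [u.2, v.2]
  exact this _ _ p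

/-- round trip 1 -/
lemma Epi_part (hT : T.IsAcyclic) {F : Finset (Sym2 (Fin n))} (hF : F ⊆ T.edgeFinset) :
    Epi T (part F) = F := by
  have hF' : ↑F ⊆ T.edgeSet := fun e he => by
    have := hF he; rwa [SimpleGraph.mem_edgeFinset] at this
  ext e
  induction e with
  | _ u v =>
    constructor
    · intro he
      rw [mem_Epi] at he
      obtain ⟨hedge, b, hb, hmem⟩ := he
      have hadj : T.Adj u v := by rwa [SimpleGraph.mem_edgeFinset, SimpleGraph.mem_edgeSet] at hedge
      obtain ⟨w, rfl⟩ := mem_parts_part.1 hb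
      have hu := mem_cls.1 (hmem u (by simp))
      have hv := mem_cls.1 (hmem v (by simp))
      have hr : (GF F).Reachable u v := hu.symm.trans hv
      by_contra he
      exact not_mem_sideOf hT hadj
        (reach_stays_side hT hadj hF' he mem_sideOf_self hr)
    · intro he
      have hadj : T.Adj u v := by
        have := hF' he; rwa [SimpleGraph.mem_edgeSet] at this
      rw [mem_Epi]
      refine ⟨by rwa [SimpleGraph.mem_edgeFinset, SimpleGraph.mem_edgeSet], cls F u,
        mem_parts_part.2 ⟨u, rfl⟩, ?_⟩
      intro a ha
      rw [Sym2.mem_iff] at ha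
      rcases ha with rfl | rfl
      · exact mem_cls.2 (SimpleGraph.Reachable.refl _)
      · exact mem_cls.2 (SimpleGraph.Adj.reachable (GF_adj.2 ⟨he, hadj.ne⟩))

/-- round trip 2 -/
lemma part_Epi {π : Finpartition (univ : Finset (Fin n))}
    (hπ : ∀ b ∈ π.parts, (T.induce (↑b : Set (Fin n))).Connected) :
    part (Epi T π) = π := by
  have key : ∀ v : Fin n, cls (Epi T π) v = π.part v := by
    intro v
    ext w
    rw [mem_cls]
    constructor
    · intro h
      exact blocks_stable h (π.part_mem.2 (mem_univ v)) (π.mem_part (mem_univ v))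
    · intro h
      exact block_reach hπ (π.part_mem.2 (mem_univ v)) (π.mem_part (mem_univ v)) h
  ext b
  rw [mem_parts_part]
  constructor
  · rintro ⟨v, rfl⟩
    rw [key]
    exact π.part_mem.2 (mem_univ v)
  · intro hb
    obtain ⟨v, hv⟩ := π.nonempty_of_mem_parts hb
    exact ⟨v, (key v ▸ (π.part_eq_of_mem hb hv)).symm⟩

/-- degree of `v` in edge set `F` -/
noncomputable def degF (F : Finset (Sym2 (Fin n))) (v : Fin n) : ℕ :=
  (F.filter fun e => v ∈ e).card

/-- vertices of odd degree -/
noncomputable def oddV (F : Finset (Sym2 (Fin n))) : Finset (Fin n) :=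
  univ.filter fun v => ¬ Even (degF F v)

lemma cast_nat_zmod2 (k : ℕ) : (k : ZMod 2) = if Even k then 0 else 1 := by
  rcases Nat.even_or_odd k with h | h
  · rw [if_pos h]
    obtain ⟨m, rfl⟩ := h
    have : ((m + m : ℕ) : ZMod 2) = 2 * (m : ZMod 2) := by push_cast; ring
    rw [this, show (2 : ZMod 2) = 0 from rfl, zero_mul]
  · rw [if_neg (Nat.not_even_iff_odd.2 h)]
    obtain ⟨m, rfl⟩ := h
    have : ((2 * m + 1 : ℕ) : ZMod 2) = 2 * (m : ZMod 2) + 1 := by push_cast; ring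
    rw [this, show (2 : ZMod 2) = 0 from rfl, zero_mul, zero_add]

lemma even_iff_cast_zero (k : ℕ) : Even k ↔ (k : ZMod 2) = 0 := by
  rw [cast_nat_zmod2]
  by_cases h : Even k <;> simp [h]

lemma cnt_parity {W : Finset (Fin n)} {e : Sym2 (Fin n)} (hnd : ¬ e.IsDiag) :
    ((W.filter fun v => v ∈ e).card : ZMod 2) = if crosses W e then 1 else 0 := by
  induction e with
  | _ x y =>
    have hxy : x ≠ y := by simpa [Sym2.mk_isDiag_iff] using hnd
    have hfil : (W.filter fun v => v ∈ s(x, y)) = W.filter (· = x) ∪ W.filter (· = y) := by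
      ext a; simp [Sym2.mem_iff, Finset.mem_union, Finset.mem_filter]; tauto
    have hdisj : Disjoint (W.filter (· = x)) (W.filter (· = y)) := by
      rw [Finset.disjoint_left]
      intro a ha hb
      rw [Finset.mem_filter] at ha hb
      exact hxy (ha.2 ▸ hb.2 ▸ rfl)
    rw [hfil, Finset.card_union_of_disjoint hdisj, Finset.filter_eq' W x, Finset.filter_eq' W y]
    by_cases hx : x ∈ W <;> by_cases hy : y ∈ W <;>
      simp [hx, hy, crosses_mk, hxy] <;> decide

lemma sum_degF {F : Finset (Sym2 (Fin n))} (hnd : ∀ e ∈ F, ¬ e.IsDiag) (W : Finset (Fin n)) :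
    ((∑ v ∈ W, degF F v : ℕ) : ZMod 2) = ((F.filter (crosses W)).card : ZMod 2) := by
  have swap : ∑ v ∈ W, degF F v = ∑ e ∈ F, (W.filter fun v => v ∈ e).card := by
    simp only [degF, Finset.card_filter]
    rw [Finset.sum_comm]
  rw [swap, Nat.cast_sum, Finset.card_filter, Nat.cast_sum]
  refine Finset.sum_congr rfl fun e he => ?_
  rw [cnt_parity (hnd e he)]
  by_cases h : crosses W e <;> simp [h]

lemma par_inter {F : Finset (Sym2 (Fin n))} (hnd : ∀ e ∈ F, ¬ e.IsDiag) (W : Finset (Fin n)) :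
    (((W ∩ oddV F).card : ℕ) : ZMod 2) = ((F.filter (crosses W)).card : ZMod 2) := by
  rw [← sum_degF hnd W]
  have h1 : W ∩ oddV F = W.filter fun v => ¬ Even (degF F v) := by
    ext a; simp [oddV]
  rw [h1, Finset.card_filter, Nat.cast_sum, Nat.cast_sum]
  refine Finset.sum_congr rfl fun v _ => ?_
  rw [cast_nat_zmod2 (degF F v)]
  by_cases h : Even (degF F v) <;> simp [h]

lemma not_crosses_cls {F : Finset (Sym2 (Fin n))} {v : Fin n} {e : Sym2 (Fin n)}
    (he : e ∈ F) (hnd : ¬ e.IsDiag) : ¬ crosses (cls F v) e := by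
  induction e with
  | _ x y =>
    have hxy : x ≠ y := by simpa [Sym2.mk_isDiag_iff] using hnd
    rw [crosses_mk]
    have key : ∀ a b : Fin n, s(a, b) ∈ F → a ≠ b → a ∈ cls F v → b ∈ cls F v := by
      intro a b hab hne ha
      rw [mem_cls] at ha ⊢
      exact ha.trans (SimpleGraph.Adj.reachable (GF_adj.2 ⟨hab, hne⟩))
    rintro ⟨h1, h2⟩
    rcases h1 with hx | hy
    · have := key x y he hxy hx
      rcases h2 with h2 | h2; exacts [h2 hx, h2 this]
    · have := key y x (by rwa [Sym2.eq_swap]) hxy.symm hy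
      rcases h2 with h2 | h2; exacts [h2 this, h2 hy]

/-- if `F₀ ⊆ F'` then every block of `part F'` meets `oddV F₀` evenly -/
lemma ML_forward {F₀ F' : Finset (Sym2 (Fin n))} (hnd : ∀ e ∈ F₀, ¬ e.IsDiag)
    (hsub : F₀ ⊆ F') {b : Finset (Fin n)} (hb : b ∈ (part F').parts) :
    Even ((b ∩ oddV F₀).card) := by
  rw [even_iff_cast_zero, par_inter hnd b]
  obtain ⟨v, rfl⟩ := mem_parts_part.1 hb
  have : F₀.filter (crosses (cls F' v)) = ∅ := by
    rw [Finset.filter_eq_empty_iff]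
    intro e he
    exact not_crosses_cls (hsub he) (hnd e he)
  rw [this]
  simp

lemma card_eq_sum_inter (π : Finpartition (univ : Finset (Fin n))) (X : Finset (Fin n)) :
    X.card = ∑ b ∈ π.parts, (X ∩ b).card := by
  rw [Finset.card_eq_sum_card_fiberwise
    (f := fun x => π.part x) (fun x _ => π.part_mem.2 (mem_univ x))]
  refine Finset.sum_congr rfl fun b hb => ?_
  congr 1
  ext x
  simp only [Finset.mem_filter, Finset.mem_inter]
  constructor
  · rintro ⟨hx, rfl⟩
    exact ⟨hx, π.mem_part (mem_univ x)⟩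
  · rintro ⟨hx, hxb⟩
    exact ⟨hx, π.part_eq_of_mem hb hxb⟩

/-- if some edge of `F₀` is missing from `F'` then some block of `part F'`
meets `oddV F₀` oddly -/
lemma ML_reverse (hT : T.IsAcyclic) {F₀ F' : Finset (Sym2 (Fin n))}
    (hF₀ : F₀ ⊆ T.edgeFinset) (hF' : F' ⊆ T.edgeFinset)
    {e : Sym2 (Fin n)} (he₀ : e ∈ F₀) (he' : e ∉ F') :
    ∃ b ∈ (part F').parts, ¬ Even ((b ∩ oddV F₀).card) := by
  by_contra hcon
  push_neg at hcon
  have hnd : ∀ f ∈ F₀, ¬ f.IsDiag := fun f hf =>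
    T.not_isDiag_of_mem_edgeSet (SimpleGraph.mem_edgeFinset.1 (hF₀ hf))
  have hF's : ↑F' ⊆ T.edgeSet := fun f hf => SimpleGraph.mem_edgeFinset.1 (hF' hf)
  induction e with
  | _ u v =>
    have hadj : T.Adj u v := by
      have := hF₀ he₀
      rwa [SimpleGraph.mem_edgeFinset, SimpleGraph.mem_edgeSet] at this
    set W := sideOf T u v with hW
    set S := oddV F₀ with hS
    -- the crossing edges of F₀ are exactly {e}
    have hfil : F₀.filter (crosses W) = {s(u, v)} := by
      ext f
      rw [Finset.mem_filter, Finset.mem_singleton]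
      constructor
      · rintro ⟨hf, hcr⟩
        by_contra hne
        exact not_crosses_sideOf hT hadj (SimpleGraph.mem_edgeFinset.1 (hF₀ hf)) hne hcr
      · rintro rfl
        exact ⟨he₀, crosses_mk.2 ⟨Or.inl mem_sideOf_self, Or.inr (not_mem_sideOf hT hadj)⟩⟩
    have hpar : (((W ∩ S).card : ℕ) : ZMod 2) = 1 := by
      rw [par_inter hnd, hfil]
      simp
    -- each block is inside W or disjoint from it
    have hblocks : ∀ b ∈ (part F').parts, b ⊆ W ∨ b ∩ W = ∅ := by
      intro b hb
      obtain ⟨w, rfl⟩ := mem_parts_part.1 hb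
      by_cases hw : w ∈ W
      · left
        intro x hx
        exact reach_stays_side hT hadj hF's he' hw (mem_cls.1 hx)
      · right
        rw [Finset.eq_empty_iff_forall_notMem]
        rintro x hx
        rw [Finset.mem_inter, mem_cls] at hx
        exact hw (reach_stays_side hT hadj hF's he' hx.2 hx.1.symm)
    -- sum the parities over blocks
    have hsum : (((W ∩ S).card : ℕ) : ZMod 2) = 0 := by
      rw [card_eq_sum_inter (part F') (W ∩ S), Nat.cast_sum]
      rw [Finset.sum_eq_zero]
      intro b hb
      rcases hblocks b hb with hbW | hbW
      · have : (W ∩ S) ∩ b = b ∩ S := by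
          ext x
          simp only [Finset.mem_inter]
          constructor
          · rintro ⟨⟨h1, h2⟩, h3⟩; exact ⟨h3, h2⟩
          · rintro ⟨h1, h2⟩; exact ⟨⟨hbW h1, h2⟩, h1⟩
        rw [this, ← even_iff_cast_zero]
        exact hcon b hb
      · have : (W ∩ S) ∩ b = ∅ := by
          rw [Finset.eq_empty_iff_forall_notMem]
          rintro x hx
          simp only [Finset.mem_inter] at hx
          rw [Finset.eq_empty_iff_forall_notMem] at hbW
          exact hbW x (Finset.mem_inter.2 ⟨hx.2, hx.1.1⟩)
        rw [this]
        simp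
    rw [hpar] at hsum
    exact one_ne_zero hsum

lemma cls_eq_of_reach {F : Finset (Sym2 (Fin n))} {x y : Fin n}
    (h : (GF F).Reachable x y) : cls F x = cls F y := by
  ext w
  rw [mem_cls, mem_cls]
  exact ⟨fun h2 => h.symm.trans h2, fun h2 => h.trans h2⟩

lemma reach_insert {F : Finset (Sym2 (Fin n))} {u v : Fin n} {x y : Fin n}
    (h : (GF (insert s(u,v) F)).Reachable x y) :
    (GF F).Reachable x y ∨ ((GF F).Reachable x u ∧ (GF F).Reachable v y) ∨
      ((GF F).Reachable x v ∧ (GF F).Reachable u y) := by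
  obtain ⟨p⟩ := h
  induction p with
  | nil => exact Or.inl (SimpleGraph.Reachable.refl _)
  | cons h q ih =>
    rename_i a b c
    rw [GF_adj, Finset.mem_insert] at h
    obtain ⟨hmem | hmem, hne⟩ := h
    · -- the step is the new edge
      rw [Sym2.eq_iff] at hmem
      rcases hmem with ⟨rfl, rfl⟩ | ⟨rfl, rfl⟩
      · rcases ih with h1 | ⟨h1, h2⟩ | ⟨h1, h2⟩
        · exact Or.inr (Or.inl ⟨SimpleGraph.Reachable.refl _, h1⟩)
        · exact Or.inr (Or.inl ⟨SimpleGraph.Reachable.refl _, h2⟩)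
        · exact Or.inl h2
      · rcases ih with h1 | ⟨h1, h2⟩ | ⟨h1, h2⟩
        · exact Or.inr (Or.inr ⟨SimpleGraph.Reachable.refl _, h1⟩)
        · exact Or.inl h2
        · exact Or.inr (Or.inr ⟨SimpleGraph.Reachable.refl _, h2⟩)
    · -- the step is an old edge
      have hab : (GF F).Reachable a b := SimpleGraph.Adj.reachable (GF_adj.2 ⟨hmem, hne⟩)
      rcases ih with h1 | ⟨h1, h2⟩ | ⟨h1, h2⟩
      · exact Or.inl (hab.trans h1)
      · exact Or.inr (Or.inl ⟨hab.trans h1, h2⟩)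
      · exact Or.inr (Or.inr ⟨hab.trans h1, h2⟩)

lemma GF_mono {F F' : Finset (Sym2 (Fin n))} (h : F ⊆ F') : GF F ≤ GF F' := by
  apply SimpleGraph.fromEdgeSet_mono
  exact_mod_cast h

lemma cls_insert_of_reach {F : Finset (Sym2 (Fin n))} {u v x : Fin n} (huv : u ≠ v)
    (hx : (GF F).Reachable x u ∨ (GF F).Reachable x v) :
    cls (insert s(u,v) F) x = cls F u ∪ cls F v := by
  have hedge : (GF (insert s(u,v) F)).Reachable u v :=
    SimpleGraph.Adj.reachable (GF_adj.2 ⟨Finset.mem_insert_self _ _, huv⟩)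
  ext w
  rw [mem_cls, Finset.mem_union, mem_cls, mem_cls]
  constructor
  · intro h
    rcases reach_insert h with h1 | ⟨h1, h2⟩ | ⟨h1, h2⟩
    · rcases hx with hx | hx
      · exact Or.inl (hx.symm.trans h1)
      · exact Or.inr (hx.symm.trans h1)
    · exact Or.inr h2
    · exact Or.inl h2
  · intro h
    have hxu : (GF (insert s(u,v) F)).Reachable x u := by
      rcases hx with hx | hx
      · exact hx.mono (GF_mono (Finset.subset_insert _ _))
      · exact (hx.mono (GF_mono (Finset.subset_insert _ _))).trans hedge.symm
    rcases h with h | h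
    · exact hxu.trans (h.mono (GF_mono (Finset.subset_insert _ _)))
    · exact (hxu.trans hedge).trans (h.mono (GF_mono (Finset.subset_insert _ _)))

lemma cls_insert_of_not {F : Finset (Sym2 (Fin n))} {u v x : Fin n}
    (hxu : ¬ (GF F).Reachable x u) (hxv : ¬ (GF F).Reachable x v) :
    cls (insert s(u,v) F) x = cls F x := by
  ext w
  rw [mem_cls, mem_cls]
  constructor
  · intro h
    rcases reach_insert h with h1 | ⟨h1, h2⟩ | ⟨h1, h2⟩
    · exact h1
    · exact absurd h1 hxu
    · exact absurd h1 hxv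
  · intro h
    exact h.mono (GF_mono (Finset.subset_insert _ _))

lemma card_image_cls_insert {F : Finset (Sym2 (Fin n))} {u v : Fin n} (huv : u ≠ v)
    (hsep : ¬ (GF F).Reachable u v) :
    (univ.image (cls F)).card = ((univ : Finset (Fin n)).image (cls (insert s(u,v) F))).card + 1 := by
  set A : Finset (Fin n) :=
    univ.filter (fun x => ¬ (GF F).Reachable x u ∧ ¬ (GF F).Reachable x v) with hA
  have hmemA : ∀ x, x ∈ A ↔ ¬ (GF F).Reachable x u ∧ ¬ (GF F).Reachable x v := by
    intro x; simp [hA]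
  -- old classes
  have h1 : univ.image (cls F) = A.image (cls F) ∪ {cls F u, cls F v} := by
    ext b
    simp only [Finset.mem_image, Finset.mem_union, Finset.mem_insert, Finset.mem_singleton,
      Finset.mem_univ, true_and]
    constructor
    · rintro ⟨x, rfl⟩
      by_cases hxu : (GF F).Reachable x u
      · exact Or.inr (Or.inl (cls_eq_of_reach hxu))
      by_cases hxv : (GF F).Reachable x v
      · exact Or.inr (Or.inr (cls_eq_of_reach hxv))
      · exact Or.inl ⟨x, (hmemA x).2 ⟨hxu, hxv⟩, rfl⟩
    · rintro (⟨x, -, rfl⟩ | rfl | rfl)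
      exacts [⟨x, rfl⟩, ⟨u, rfl⟩, ⟨v, rfl⟩]
  -- new classes
  have h2 : (univ : Finset (Fin n)).image (cls (insert s(u,v) F)) =
      A.image (cls F) ∪ {cls F u ∪ cls F v} := by
    ext b
    simp only [Finset.mem_image, Finset.mem_union, Finset.mem_singleton,
      Finset.mem_univ, true_and]
    constructor
    · rintro ⟨x, rfl⟩
      by_cases hxu : (GF F).Reachable x u
      · exact Or.inr (cls_insert_of_reach huv (Or.inl hxu))
      by_cases hxv : (GF F).Reachable x v
      · exact Or.inr (cls_insert_of_reach huv (Or.inr hxv))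
      · exact Or.inl ⟨x, (hmemA x).2 ⟨hxu, hxv⟩, (cls_insert_of_not hxu hxv).symm⟩
    · rintro (⟨x, hx, rfl⟩ | rfl)
      · obtain ⟨hxu, hxv⟩ := (hmemA x).1 hx
        exact ⟨x, cls_insert_of_not hxu hxv⟩
      · exact ⟨u, cls_insert_of_reach huv (Or.inl (SimpleGraph.Reachable.refl _))⟩
  -- disjointness facts
  have hne_uA : ∀ x ∈ A, cls F x ≠ cls F u := by
    intro x hx hcls
    have : u ∈ cls F x := hcls ▸ mem_cls.2 (SimpleGraph.Reachable.refl _)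
    exact ((hmemA x).1 hx).1 (mem_cls.1 this)
  have hne_vA : ∀ x ∈ A, cls F x ≠ cls F v := by
    intro x hx hcls
    have : v ∈ cls F x := hcls ▸ mem_cls.2 (SimpleGraph.Reachable.refl _)
    exact ((hmemA x).1 hx).2 (mem_cls.1 this)
  have huv_ne : cls F u ≠ cls F v := by
    intro hcls
    have : v ∈ cls F u := hcls ▸ mem_cls.2 (SimpleGraph.Reachable.refl _)
    exact hsep (mem_cls.1 this)
  have hcard1 : (A.image (cls F) ∪ {cls F u, cls F v}).card = (A.image (cls F)).card + 2 := by
    rw [Finset.card_union_of_disjoint, Finset.card_insert_of_notMem (by simpa using huv_ne),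
      Finset.card_singleton]
    rw [Finset.disjoint_right]
    intro b hb hbi
    obtain ⟨x, hx, rfl⟩ := Finset.mem_image.1 hbi
    simp only [Finset.mem_insert, Finset.mem_singleton] at hb
    rcases hb with hb | hb
    · exact hne_uA x hx hb
    · exact hne_vA x hx hb
  have hcard2 : (A.image (cls F) ∪ {cls F u ∪ cls F v}).card = (A.image (cls F)).card + 1 := by
    rw [Finset.card_union_of_disjoint, Finset.card_singleton]
    rw [Finset.disjoint_right]
    intro b hb hbi
    obtain ⟨x, hx, rfl⟩ := Finset.mem_image.1 hbi
    rw [Finset.mem_singleton] at hb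
    have : u ∈ cls F x := by
      rw [hb]
      exact Finset.mem_union_left _ (mem_cls.2 (SimpleGraph.Reachable.refl _))
    exact ((hmemA x).1 hx).1 (mem_cls.1 this)
  rw [h1, h2, hcard1, hcard2]

lemma not_reach_of_not_mem (hT : T.IsAcyclic) {F : Finset (Sym2 (Fin n))}
    (hF : ↑F ⊆ T.edgeSet) {u v : Fin n} (hadj : T.Adj u v) (he : s(u,v) ∉ F) :
    ¬ (GF F).Reachable u v :=
  fun hr => not_mem_sideOf hT hadj (reach_stays_side hT hadj hF he mem_sideOf_self hr)

lemma parts_card (hT : T.IsAcyclic) {F : Finset (Sym2 (Fin n))} (hF : F ⊆ T.edgeFinset) :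
    (part F).parts.card + F.card = n := by
  revert hF
  induction F using Finset.cons_induction_on with
  | empty =>
    intro _
    rw [parts_part, Finset.card_empty, add_zero]
    have : cls (∅ : Finset (Sym2 (Fin n))) = fun v => {v} := by
      funext v
      ext w
      rw [mem_cls, Finset.mem_singleton]
      have : GF (∅ : Finset (Sym2 (Fin n))) = ⊥ := by
        simp [GF]
      rw [this, SimpleGraph.reachable_bot, eq_comm]
    rw [this, Finset.card_image_of_injective _ Finset.singleton_injective, Finset.card_univ,
      Fintype.card_fin]
  | cons _ _ hnotmem ih =>
    rename_i e F
    intro hF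
    rw [Finset.cons_eq_insert] at hF ⊢
    have hFsub : F ⊆ T.edgeFinset := fun f hf => hF (Finset.mem_insert_of_mem hf)
    have hFs : ↑F ⊆ T.edgeSet := fun f hf => SimpleGraph.mem_edgeFinset.1 (hFsub hf)
    have heT : e ∈ T.edgeFinset := hF (Finset.mem_insert_self _ _)
    induction e with
    | _ u v =>
      have hadj : T.Adj u v := by rwa [SimpleGraph.mem_edgeFinset, SimpleGraph.mem_edgeSet] at heT
      have hsep := not_reach_of_not_mem hT hFs hadj hnotmem
      have h1 := card_image_cls_insert hadj.ne hsep
      have h2 := ih hFsub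
      rw [parts_part] at h2
      rw [parts_part, Finset.card_insert_of_notMem hnotmem]
      omega
lemma card_even_subsets (hn : 1 ≤ n) :
    Fintype.card {S : Finset (Fin n) // Even S.card} = 2 ^ (n - 1) := by
  classical
  set z : Fin n := ⟨0, hn⟩ with hz
  set i : Finset (Fin n) → Finset (Fin n) :=
    fun S => if z ∈ S then S.erase z else insert z S with hi
  have hpar : ∀ S, Even ((i S).card) ↔ ¬ Even S.card := by
    intro S
    by_cases hzS : z ∈ S
    · simp only [hi, if_pos hzS, Finset.card_erase_of_mem hzS]
      have h1 : 1 ≤ S.card := Finset.card_pos.2 ⟨z, hzS⟩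
      rw [Nat.even_iff, Nat.even_iff]
      omega
    · simp only [hi, if_neg hzS, Finset.card_insert_of_notMem hzS]
      rw [Nat.even_iff, Nat.even_iff]
      omega
  have hinv : ∀ S, i (i S) = S := by
    intro S
    by_cases hzS : z ∈ S
    · have h1 : i S = S.erase z := if_pos hzS
      have h2 : i (S.erase z) = insert z (S.erase z) := if_neg (Finset.notMem_erase z S)
      rw [h1, h2, Finset.insert_erase hzS]
    · have h1 : i S = insert z S := if_neg hzS
      have h2 : i (insert z S) = (insert z S).erase z := if_pos (Finset.mem_insert_self z S)
      rw [h1, h2, Finset.erase_insert hzS]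
  have hbij : ((univ : Finset (Finset (Fin n))).filter fun S => Even S.card).card
      = ((univ : Finset (Finset (Fin n))).filter fun S => ¬ Even S.card).card := by
    refine Finset.card_bij' (fun S _ => i S) (fun S _ => i S) ?_ ?_ ?_ ?_
    · intro S hS
      rw [Finset.mem_filter] at hS ⊢
      exact ⟨Finset.mem_univ _, fun h => ((hpar S).1 h) hS.2⟩
    · intro S hS
      rw [Finset.mem_filter] at hS ⊢
      exact ⟨Finset.mem_univ _, (hpar S).2 hS.2⟩
    · intro S _; exact hinv S
    · intro S _; exact hinv S
  have hsplit := Finset.card_filter_add_card_filter_not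
    (s := (univ : Finset (Finset (Fin n)))) (p := fun S => Even S.card)
  have hcard : (univ : Finset (Finset (Fin n))).card = 2 ^ n := by
    rw [Finset.card_univ, Fintype.card_finset, Fintype.card_fin]
  rw [Fintype.card_subtype]
  have hpow : 2 ^ n = 2 * 2 ^ (n - 1) := by
    rw [← pow_succ']
    congr 1
    omega
  omega

lemma oddV_even {F : Finset (Sym2 (Fin n))} (hnd : ∀ e ∈ F, ¬ e.IsDiag) :
    Even (oddV F).card := by
  have := par_inter hnd (univ : Finset (Fin n))
  rw [even_iff_cast_zero]
  have huniv : (univ : Finset (Fin n)) ∩ oddV F = oddV F := by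
    simp
  have hfil : F.filter (crosses (univ : Finset (Fin n))) = ∅ := by
    rw [Finset.filter_eq_empty_iff]
    intro e _
    rintro ⟨-, b, -, hb⟩
    exact hb (Finset.mem_univ b)
  rw [huniv] at this
  rw [this, hfil]
  simp

lemma mem_iff_odd_side (hT : T.IsAcyclic) {F : Finset (Sym2 (Fin n))}
    (hF : F ⊆ T.edgeFinset) {u v : Fin n} (hadj : T.Adj u v) :
    s(u,v) ∈ F ↔ ¬ Even ((sideOf T u v ∩ oddV F).card) := by
  have hnd : ∀ e ∈ F, ¬ e.IsDiag := fun f hf =>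
    T.not_isDiag_of_mem_edgeSet (SimpleGraph.mem_edgeFinset.1 (hF hf))
  have hfil : F.filter (crosses (sideOf T u v)) = if s(u,v) ∈ F then {s(u,v)} else ∅ := by
    ext f
    rw [Finset.mem_filter]
    by_cases hmem : s(u,v) ∈ F
    · rw [if_pos hmem, Finset.mem_singleton]
      constructor
      · rintro ⟨hf, hcr⟩
        by_contra hne
        exact not_crosses_sideOf hT hadj (SimpleGraph.mem_edgeFinset.1 (hF hf)) hne hcr
      · rintro rfl
        exact ⟨hmem, crosses_mk.2 ⟨Or.inl mem_sideOf_self, Or.inr (not_mem_sideOf hT hadj)⟩⟩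
    · rw [if_neg hmem]
      simp only [Finset.notMem_empty, iff_false, not_and]
      intro hf hcr
      rcases eq_or_ne f s(u,v) with rfl | hne
      · exact hmem hf
      · exact not_crosses_sideOf hT hadj (SimpleGraph.mem_edgeFinset.1 (hF hf)) hne hcr
  rw [even_iff_cast_zero, par_inter hnd, hfil]
  by_cases hmem : s(u,v) ∈ F <;> simp [hmem]

lemma oddV_injective (hT : T.IsAcyclic) {F₁ F₂ : Finset (Sym2 (Fin n))}
    (h₁ : F₁ ⊆ T.edgeFinset) (h₂ : F₂ ⊆ T.edgeFinset) (h : oddV F₁ = oddV F₂) :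
    F₁ = F₂ := by
  ext e
  by_cases he : e ∈ T.edgeFinset
  · induction e with
    | _ u v =>
      have hadj : T.Adj u v := by rwa [SimpleGraph.mem_edgeFinset, SimpleGraph.mem_edgeSet] at he
      rw [mem_iff_odd_side hT h₁ hadj, mem_iff_odd_side hT h₂ hadj, h]
  · constructor
    · intro hmem; exact absurd (h₁ hmem) he
    · intro hmem; exact absurd (h₂ hmem) he

lemma card_psubsets (hT : T.IsTree) (hn : 1 ≤ n) :
    Fintype.card {F : Finset (Sym2 (Fin n)) // F ⊆ T.edgeFinset} = 2 ^ (n - 1) := by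
  classical
  rw [Fintype.card_subtype]
  have : (univ : Finset (Finset (Sym2 (Fin n)))).filter (· ⊆ T.edgeFinset)
      = T.edgeFinset.powerset := by
    ext F
    simp [Finset.mem_powerset]
  rw [this, Finset.card_powerset]
  congr 1
  have := hT.card_edgeFinset
  rw [Fintype.card_fin] at this
  omega

/-- the partition equivalence -/
noncomputable def partEquiv (hT : T.IsAcyclic) :
    {F : Finset (Sym2 (Fin n)) // F ⊆ T.edgeFinset} ≃
    {π : Finpartition (univ : Finset (Fin n)) //
      ∀ b ∈ π.parts, (T.induce (↑b : Set (Fin n))).Connected} where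
  toFun F := ⟨part F.1, part_conn (fun e he => SimpleGraph.mem_edgeFinset.1 (F.2 he))⟩
  invFun π := ⟨Epi T π.1, Epi_subset _⟩
  left_inv F := Subtype.ext (Epi_part hT F.2)
  right_inv π := Subtype.ext (part_Epi π.2)

/-- the odd-vertices equivalence -/
noncomputable def oddEquiv (hT : T.IsTree) (hn : 1 ≤ n) :
    {F : Finset (Sym2 (Fin n)) // F ⊆ T.edgeFinset} ≃
    {S : Finset (Fin n) // Even S.card} := by
  refine Equiv.ofBijective
    (fun F => ⟨oddV F.1, oddV_even (fun f hf =>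
      T.not_isDiag_of_mem_edgeSet (SimpleGraph.mem_edgeFinset.1 (F.2 hf)))⟩) ?_
  rw [Fintype.bijective_iff_injective_and_card]
  constructor
  · intro F₁ F₂ hF
    exact Subtype.ext (oddV_injective hT.IsAcyclic F₁.2 F₂.2 (congrArg Subtype.val hF))
  · rw [card_psubsets hT hn, card_even_subsets hn]

/-- the inclusion-exclusion sum -/
lemma sum_ie {α : Type*} [DecidableEq α] (F₀ F : Finset α) :
    ∑ F' ∈ F.powerset, (-1 : ℝ) ^ (F.card - F'.card) * (if F₀ ⊆ F' then 1 else 0)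
      = if F₀ = F then 1 else 0 := by
  by_cases hsub : F₀ ⊆ F
  · have key : ∀ s : Finset α, ∑ G ∈ s.powerset, (-1 : ℝ) ^ G.card
        = if s = ∅ then 1 else 0 := by
      intro s
      have h0 := Finset.sum_powerset_neg_one_pow_card (x := s)
      have h2 : ((∑ m ∈ s.powerset, (-1 : ℤ) ^ m.card : ℤ) : ℝ)
          = ∑ G ∈ s.powerset, (-1 : ℝ) ^ G.card := by push_cast; rfl
      rw [← h2, h0]
      by_cases h : s = ∅ <;> simp [h]
    have h1 : ∑ F' ∈ F.powerset, (-1 : ℝ) ^ (F.card - F'.card) * (if F₀ ⊆ F' then 1 else 0)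
        = ∑ F' ∈ F.powerset.filter (fun F' => F₀ ⊆ F'), (-1 : ℝ) ^ (F.card - F'.card) := by
      rw [Finset.sum_filter]
      refine Finset.sum_congr rfl fun F' _ => ?_
      by_cases h : F₀ ⊆ F' <;> simp [h]
    have h2 : ∑ F' ∈ F.powerset.filter (fun F' => F₀ ⊆ F'), (-1 : ℝ) ^ (F.card - F'.card)
        = ∑ G ∈ (F \ F₀).powerset, (-1 : ℝ) ^ ((F \ F₀).card - G.card) := by
      refine Finset.sum_nbij' (fun F' => F' \ F₀) (fun G => F₀ ∪ G) ?_ ?_ ?_ ?_ ?_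
      · intro F' hF'
        rw [Finset.mem_filter, Finset.mem_powerset] at hF'
        rw [Finset.mem_powerset]
        exact Finset.sdiff_subset_sdiff hF'.1 (Finset.Subset.refl _)
      · intro G hG
        rw [Finset.mem_powerset] at hG
        rw [Finset.mem_filter, Finset.mem_powerset]
        exact ⟨Finset.union_subset hsub (hG.trans (Finset.sdiff_subset)),
          Finset.subset_union_left⟩
      · intro F' hF'
        rw [Finset.mem_filter] at hF'
        exact Finset.union_sdiff_of_subset hF'.2
      · intro G hG
        rw [Finset.mem_powerset] at hG
        refine Finset.union_sdiff_cancel_left ?_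
        exact Finset.disjoint_of_subset_right hG Finset.disjoint_sdiff
      · intro F' hF'
        rw [Finset.mem_filter, Finset.mem_powerset] at hF'
        congr 1
        have hc1 : F₀.card ≤ F'.card := Finset.card_le_card hF'.2
        have hc2 : F'.card ≤ F.card := Finset.card_le_card hF'.1
        rw [Finset.card_sdiff_of_subset hF'.2, Finset.card_sdiff_of_subset hsub]
        omega
    have h3 : ∑ G ∈ (F \ F₀).powerset, (-1 : ℝ) ^ ((F \ F₀).card - G.card)
        = ∑ G ∈ (F \ F₀).powerset, (-1 : ℝ) ^ (F \ F₀).card * (-1 : ℝ) ^ G.card := by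
      refine Finset.sum_congr rfl fun G hG => ?_
      rw [Finset.mem_powerset] at hG
      have hle : G.card ≤ (F \ F₀).card := Finset.card_le_card hG
      have : (-1 : ℝ) ^ ((F \ F₀).card - G.card) * (-1 : ℝ) ^ G.card
          = (-1 : ℝ) ^ (F \ F₀).card := by
        rw [← pow_add]
        congr 1
        omega
      have hsq : ((-1 : ℝ) ^ G.card) * ((-1 : ℝ) ^ G.card) = 1 := by
        rw [← pow_add, ← two_mul, pow_mul]
        norm_num
      calc (-1 : ℝ) ^ ((F \ F₀).card - G.card)
          = (-1 : ℝ) ^ ((F \ F₀).card - G.card) * (((-1 : ℝ) ^ G.card) * ((-1 : ℝ) ^ G.card)) := by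
            rw [hsq, mul_one]
        _ = (-1 : ℝ) ^ (F \ F₀).card * (-1 : ℝ) ^ G.card := by
            rw [← mul_assoc, this]
    rw [h1, h2, h3, ← Finset.mul_sum, key]
    have hiff : F \ F₀ = ∅ ↔ F₀ = F := by
      rw [Finset.sdiff_eq_empty_iff_subset]
      exact ⟨fun h => Finset.Subset.antisymm hsub h, fun h => by rw [h]⟩
    by_cases h : F₀ = F
    · rw [if_pos (hiff.2 h), if_pos h, mul_one, hiff.2 h]
      norm_num
    · rw [if_neg (fun hh => h (hiff.1 hh)), if_neg h, mul_zero]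
  · rw [if_neg (show ¬ F₀ = F from fun h => hsub (by rw [h]))]
    refine Finset.sum_eq_zero fun F' hF' => ?_
    rw [Finset.mem_powerset] at hF'
    rw [if_neg (fun h => hsub (h.trans hF')), mul_zero]

lemma Epi_subset_of_refines {π' π : Finpartition (univ : Finset (Fin n))}
    (h : ∀ b ∈ π'.parts, ∃ c ∈ π.parts, b ⊆ c) : Epi T π' ⊆ Epi T π := by
  intro e he
  rw [mem_Epi] at he ⊢
  obtain ⟨h1, b, hb, hmem⟩ := he
  obtain ⟨c, hc, hbc⟩ := h b hb
  exact ⟨h1, c, hc, fun a ha => hbc (hmem a ha)⟩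

lemma A_iff (hT : T.IsAcyclic) {F₀ F' : Finset (Sym2 (Fin n))}
    (hF₀ : F₀ ⊆ T.edgeFinset) (hF' : F' ⊆ T.edgeFinset) :
    (∀ b ∈ (part F').parts, Even ((b ∩ oddV F₀).card)) ↔ F₀ ⊆ F' := by
  constructor
  · intro h
    by_contra hsub
    obtain ⟨e, he₀, he'⟩ := Finset.not_subset.1 hsub
    obtain ⟨b, hb, hodd⟩ := ML_reverse hT hF₀ hF' he₀ he'
    exact hodd (h b hb)
  · intro hsub b hb
    exact ML_forward (fun f hf =>
      T.not_isDiag_of_mem_edgeSet (SimpleGraph.mem_edgeFinset.1 (hF₀ hf))) hsub hb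

end Stmt3Aux

open scoped Classical in
theorem stmt3 (n : ℕ) (hn : 1 ≤ n) (T : SimpleGraph (Fin n)) (hT : T.IsTree) :
    let ConnP := {π : Finpartition (univ : Finset (Fin n)) //
        ∀ b ∈ π.parts, (T.induce (b : Set (Fin n))).Connected}
    let EvenS := {S : Finset (Fin n) // Even S.card}
    let A : Matrix EvenS ConnP ℝ := fun S π =>
      if ∀ b ∈ π.1.parts, Even (b ∩ S.1).card then 1 else 0
    let B : Matrix EvenS ConnP ℝ := fun S π =>
      ∑ π' ∈ (Finset.univ : Finset ConnP).filter
          (fun π' => ∀ b ∈ π'.1.parts, ∃ c ∈ π.1.parts, b ⊆ c),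
        (-1 : ℝ) ^ (π'.1.parts.card - π.1.parts.card) * A S π'
    (∃ e : EvenS ≃ ConnP, ∀ S π, B S π = if π = e S then 1 else 0) ∧
      A.rank = 2 ^ (n - 1) := by
  intro ConnP EvenS A B
  have hTA : T.IsAcyclic := hT.IsAcyclic
  let pe := Stmt3Aux.partEquiv (T := T) hTA
  let oe := Stmt3Aux.oddEquiv hT hn
  let e : EvenS ≃ ConnP := oe.symm.trans pe
  have hB : ∀ (S : EvenS) (π : ConnP), B S π = if π = e S then 1 else 0 := by
    intro S π
    set F₀ : {F : Finset (Sym2 (Fin n)) // F ⊆ T.edgeFinset} := oe.symm S with hF₀def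
    have hS : Stmt3Aux.oddV F₀.1 = S.1 := by
      have h := oe.apply_symm_apply S
      exact congrArg Subtype.val h
    set F : Finset (Sym2 (Fin n)) := Stmt3Aux.Epi T π.1 with hFdef
    have hFsub : F ⊆ T.edgeFinset := Stmt3Aux.Epi_subset _
    have hπ : Stmt3Aux.part F = π.1 := Stmt3Aux.part_Epi π.2
    have hsum : B S π = ∑ F' ∈ F.powerset,
        (-1 : ℝ) ^ (F.card - F'.card) * (if F₀.1 ⊆ F' then 1 else 0) := by
      show (∑ π' ∈ (Finset.univ : Finset ConnP).filter
          (fun π' => ∀ b ∈ π'.1.parts, ∃ c ∈ π.1.parts, b ⊆ c),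
        (-1 : ℝ) ^ (π'.1.parts.card - π.1.parts.card) * A S π') = _
      refine Finset.sum_nbij' (fun π' => Stmt3Aux.Epi T π'.1)
        (fun F' => ⟨Stmt3Aux.part (F' ∩ T.edgeFinset),
          Stmt3Aux.part_conn (fun f hf => SimpleGraph.mem_edgeFinset.1
            (Finset.mem_of_mem_inter_right hf))⟩) ?_ ?_ ?_ ?_ ?_
      · intro π' hπ'
        rw [Finset.mem_filter] at hπ'
        rw [Finset.mem_powerset]
        exact Stmt3Aux.Epi_subset_of_refines hπ'.2
      · intro F' hF'
        rw [Finset.mem_powerset] at hF'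
        rw [Finset.mem_filter]
        refine ⟨Finset.mem_univ _, ?_⟩
        intro b hb
        have hint : F' ∩ T.edgeFinset = F' :=
          Finset.inter_eq_left.2 (hF'.trans hFsub)
        have hb' : b ∈ (Stmt3Aux.part (F' ∩ T.edgeFinset)).parts := hb
        rw [hint] at hb'
        obtain ⟨v, rfl⟩ := Stmt3Aux.mem_parts_part.1 hb'
        refine ⟨π.1.part v, π.1.part_mem.2 (Finset.mem_univ v), ?_⟩
        intro w hw
        rw [Stmt3Aux.mem_cls] at hw
        have hr : (Stmt3Aux.GF F).Reachable v w :=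
          hw.mono (Stmt3Aux.GF_mono hF')
        exact Stmt3Aux.blocks_stable hr (π.1.part_mem.2 (Finset.mem_univ v))
          (π.1.mem_part (Finset.mem_univ v))
      · intro π' hπ'
        refine Subtype.ext ?_
        have hint : Stmt3Aux.Epi T π'.1 ∩ T.edgeFinset = Stmt3Aux.Epi T π'.1 :=
          Finset.inter_eq_left.2 (Stmt3Aux.Epi_subset _)
        show Stmt3Aux.part (Stmt3Aux.Epi T π'.1 ∩ T.edgeFinset) = π'.1
        rw [hint]
        exact Stmt3Aux.part_Epi π'.2
      · intro F' hF'
        rw [Finset.mem_powerset] at hF'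
        have hint : F' ∩ T.edgeFinset = F' :=
          Finset.inter_eq_left.2 (hF'.trans hFsub)
        show Stmt3Aux.Epi T (Stmt3Aux.part (F' ∩ T.edgeFinset)) = F'
        rw [hint]
        exact Stmt3Aux.Epi_part hTA (hF'.trans hFsub)
      · intro π' hπ'
        rw [Finset.mem_filter] at hπ'
        have hsub' : Stmt3Aux.Epi T π'.1 ⊆ F := Stmt3Aux.Epi_subset_of_refines hπ'.2
        have hc1 : π'.1.parts.card + (Stmt3Aux.Epi T π'.1).card = n := by
          have h := Stmt3Aux.parts_card hTA (Stmt3Aux.Epi_subset (T := T) π'.1)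
          rwa [Stmt3Aux.part_Epi π'.2] at h
        have hc2 : π.1.parts.card + F.card = n := by
          have h := Stmt3Aux.parts_card hTA hFsub
          rwa [hπ] at h
        have hcle : (Stmt3Aux.Epi T π'.1).card ≤ F.card := Finset.card_le_card hsub'
        have hexp : π'.1.parts.card - π.1.parts.card
            = F.card - (Stmt3Aux.Epi T π'.1).card := by omega
        rw [hexp]
        congr 1
        show A S π' = _
        have hA : A S π' = if ∀ b ∈ π'.1.parts, Even ((b ∩ S.1).card) then (1:ℝ) else 0 := rfl
        rw [hA]
        refine if_congr ?_ rfl rfl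
        rw [← hS]
        conv_lhs => rw [← Stmt3Aux.part_Epi π'.2]
        exact Stmt3Aux.A_iff hTA F₀.2 (Stmt3Aux.Epi_subset _)
    rw [hsum, Stmt3Aux.sum_ie]
    refine if_congr ?_ rfl rfl
    constructor
    · intro h
      show π = pe (oe.symm S)
      rw [← hF₀def]
      have : F₀ = pe.symm π := by
        refine Subtype.ext ?_
        show F₀.1 = Stmt3Aux.Epi T π.1
        rw [h, hFdef]
      rw [this, Equiv.apply_symm_apply]
    · intro h
      have h2 : pe.symm π = F₀ := by
        rw [h]
        show pe.symm (pe (oe.symm S)) = F₀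
        rw [Equiv.symm_apply_apply, ← hF₀def]
      have := congrArg Subtype.val h2
      exact this.symm
  refine ⟨⟨e, hB⟩, ?_⟩
  -- rank computation
  have hcardC : Fintype.card ConnP = 2 ^ (n - 1) := by
    rw [← Stmt3Aux.card_psubsets hT hn]
    exact (Fintype.card_congr pe).symm
  have hcardE : Fintype.card EvenS = 2 ^ (n - 1) := Stmt3Aux.card_even_subsets hn
  set M : Matrix ConnP ConnP ℝ := fun π' π =>
    if ∀ b ∈ π'.1.parts, ∃ c ∈ π.1.parts, b ⊆ c then
      (-1 : ℝ) ^ (π'.1.parts.card - π.1.parts.card) else 0 with hM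
  have hBAM : B = A * M := by
    ext S π
    rw [Matrix.mul_apply]
    show (∑ π' ∈ (Finset.univ : Finset ConnP).filter
        (fun π' => ∀ b ∈ π'.1.parts, ∃ c ∈ π.1.parts, b ⊆ c),
      (-1 : ℝ) ^ (π'.1.parts.card - π.1.parts.card) * A S π') = _
    rw [Finset.sum_filter]
    refine Finset.sum_congr rfl fun π' _ => ?_
    by_cases h : ∀ b ∈ π'.1.parts, ∃ c ∈ π.1.parts, b ⊆ c
    · rw [if_pos h]
      have : M π' π = (-1 : ℝ) ^ (π'.1.parts.card - π.1.parts.card) := by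
        rw [hM]; exact if_pos h
      rw [this]
      ring
    · rw [if_neg h]
      have : M π' π = 0 := by rw [hM]; exact if_neg h
      rw [this, mul_zero]
  have hrankB : B.rank = 2 ^ (n - 1) := by
    have hsurj : Function.Surjective B.mulVecLin := by
      intro y
      refine ⟨fun π => y (e.symm π), ?_⟩
      ext S
      rw [Matrix.mulVecLin_apply, Matrix.mulVec, dotProduct]
      have hterm : ∀ π : ConnP, B S π * (fun π => y (e.symm π)) π
          = if π = e S then y (e.symm π) else 0 := by
        intro π
        rw [hB S π]
        by_cases h : π = e S
        · rw [if_pos h, if_pos h, one_mul]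
        · rw [if_neg h, if_neg h, zero_mul]
      rw [Finset.sum_congr rfl (fun π _ => hterm π), Finset.sum_ite_eq' Finset.univ (e S)]
      rw [if_pos (Finset.mem_univ _), Equiv.symm_apply_apply]
    have hrange : LinearMap.range B.mulVecLin = ⊤ := LinearMap.range_eq_top.2 hsurj
    show Module.finrank ℝ (LinearMap.range B.mulVecLin) = 2 ^ (n - 1)
    rw [hrange, finrank_top, Module.finrank_pi, hcardE]
  have h2 : B.rank ≤ A.rank := by
    rw [hBAM]
    exact Matrix.rank_mul_le_left A M
  have h3 : A.rank ≤ Fintype.card EvenS := Matrix.rank_le_card_height A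
  rw [hcardE] at h3
  omega
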